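/- If A = UΛUᵀ = U'Λ'(U')ᵀ are two spectral decompositions of a real symmetric n×n matrix A of rank k, with U, U' ∈ ℝ^{n×k} having orthonormal columns that are eigenvectors with (nonzero) eigenvalues on the diagonals of Λ, Λ', then the number of distinct rows of U equals the number of distinct rows of U'. -/
import Mathlib


open Finset Matrix

lemma stmt_15_aux {n k : ℕ} (A : Matrix (Fin n) (Fin n) ℝ)
    (U U' : Matrix (Fin n) (Fin k) ℝ) (d d' : Fin k → ℝ)
    (hdec : A = U * Matrix.diagonal d * Uᵀ)
    (hdec' : A = U' * Matrix.diagonal d' * U'ᵀ)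
    (horth' : U'ᵀ * U' = 1)
    (hd' : ∀ q, d' q ≠ 0) :
    U' = U * (Matrix.diagonal d * Uᵀ * U' * Matrix.diagonal (fun q => (d' q)⁻¹)) := by
  have hdd' : Matrix.diagonal d' * Matrix.diagonal (fun q => (d' q)⁻¹) = 1 := by
    rw [Matrix.diagonal_mul_diagonal]
    have : (fun q => d' q * (d' q)⁻¹) = fun _ => (1 : ℝ) :=
      funext fun q => mul_inv_cancel₀ (hd' q)
    rw [this, Matrix.diagonal_one]
  have h1 : U' * Matrix.diagonal d' = U * Matrix.diagonal d * Uᵀ * U' := by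
    calc U' * Matrix.diagonal d'
        = U' * Matrix.diagonal d' * U'ᵀ * U' := by
          rw [Matrix.mul_assoc, horth', Matrix.mul_one]
      _ = A * U' := by rw [hdec']
      _ = U * Matrix.diagonal d * Uᵀ * U' := by rw [hdec]
  calc U' = U' * Matrix.diagonal d' * Matrix.diagonal (fun q => (d' q)⁻¹) := by
        rw [Matrix.mul_assoc, hdd', Matrix.mul_one]
    _ = U * Matrix.diagonal d * Uᵀ * U' * Matrix.diagonal (fun q => (d' q)⁻¹) := by
        rw [h1]
    _ = U * (Matrix.diagonal d * Uᵀ * U' * Matrix.diagonal (fun q => (d' q)⁻¹)) := by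
        simp only [Matrix.mul_assoc]

lemma stmt_15_card_le {n k : ℕ} (A : Matrix (Fin n) (Fin n) ℝ)
    (U U' : Matrix (Fin n) (Fin k) ℝ) (d d' : Fin k → ℝ)
    (hdec : A = U * Matrix.diagonal d * Uᵀ)
    (hdec' : A = U' * Matrix.diagonal d' * U'ᵀ)
    (horth' : U'ᵀ * U' = 1)
    (hd' : ∀ q, d' q ≠ 0) :
    (Finset.univ.image (fun i : Fin n => U' i)).card ≤
      (Finset.univ.image (fun i : Fin n => U i)).card := by
  set O := Matrix.diagonal d * Uᵀ * U' * Matrix.diagonal (fun q => (d' q)⁻¹) with hO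
  have key : U' = U * O := stmt_15_aux A U U' d d' hdec hdec' horth' hd'
  set f : (Fin k → ℝ) → (Fin k → ℝ) := fun v => fun j => ∑ p, v p * O p j with hf
  have hrow : ∀ i, U' i = f (U i) := by
    intro i
    funext j
    have := congrFun (congrFun key i) j
    rw [Matrix.mul_apply] at this
    exact this
  have himg : Finset.univ.image (fun i : Fin n => U' i) =
      (Finset.univ.image (fun i : Fin n => U i)).image f := by
    rw [Finset.image_image]
    exact congrArg (fun g : Fin n → Fin k → ℝ => Finset.image g Finset.univ) (funext hrow)
  rw [himg]
  exact Finset.card_image_le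

theorem stmt_15 (n k : ℕ) (A : Matrix (Fin n) (Fin n) ℝ) (hA : A.IsSymm)
    (hrank : A.rank = k)
    (U U' : Matrix (Fin n) (Fin k) ℝ) (d d' : Fin k → ℝ)
    (hdec : A = U * Matrix.diagonal d * Uᵀ)
    (hdec' : A = U' * Matrix.diagonal d' * U'ᵀ)
    (horth : Uᵀ * U = 1) (horth' : U'ᵀ * U' = 1)
    (hd : ∀ q, d q ≠ 0) (hd' : ∀ q, d' q ≠ 0) :
    (Finset.univ.image (fun i : Fin n => U i)).card =
      (Finset.univ.image (fun i : Fin n => U' i)).card := by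
  exact le_antisymm
    (stmt_15_card_le A U' U d' d hdec' hdec horth hd)
    (stmt_15_card_le A U U' d d' hdec hdec' horth' hd')
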